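/- Let [r, s] be an arbitrary interval of positive integers with r ≤ s. Then there exists a sequence of consecutive intervals I_1 = [i_1, i_2 − 1], I_2 = [i_2, i_3 − 1], …, I_v = [i_v, i_{v+1} − 1], all belonging to 𝒞, such that i_1 = r, i_v ≤ s ≤ i_{v+1} − 1, and v ≤ ⌈log₂(s − r + 2)⌉. -/

import Mathlib

/-- The right endpoint of the unique compact geometric covering (CGC) interval with left
endpoint `i ≥ 1`: if `i = α·2^k` with `α` odd, the interval is `[i, i + 2^k − 1]`. -/
def cgcEnd (i : ℕ) : ℕ := i + 2 ^ padicValNat 2 i - 1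

/-- The next CGC left endpoint after the interval starting at `i`. -/
def cgcNext (i : ℕ) : ℕ := i + 2 ^ padicValNat 2 i

lemma cgcEnd_add_one (i : ℕ) : cgcEnd i + 1 = cgcNext i := by
  have h : 1 ≤ i + 2 ^ padicValNat 2 i := le_add_of_le_right Nat.one_le_two_pow
  unfold cgcEnd cgcNext
  omega

lemma lt_cgcNext (i : ℕ) : i < cgcNext i :=
  Nat.lt_add_of_pos_right (Nat.pow_pos (by norm_num))

lemma padicValNat_cgcNext (i : ℕ) (hi : 1 ≤ i) :
    padicValNat 2 i + 1 ≤ padicValNat 2 (cgcNext i) := by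
  haveI : Fact (Nat.Prime 2) := ⟨Nat.prime_two⟩
  set k := padicValNat 2 i with hk
  obtain ⟨a, ha⟩ := pow_padicValNat_dvd (p := 2) (n := i)
  have hodd : ¬ 2 ∣ a := by
    intro ⟨b, hb⟩
    have : 2 ^ (k + 1) ∣ i := ⟨b, by rw [ha, hb]; ring⟩
    exact pow_succ_padicValNat_not_dvd (by omega) this
  have hdvd : 2 ^ (k + 1) ∣ cgcNext i := by
    have : cgcNext i = 2 ^ k * (a + 1) := by
      unfold cgcNext; rw [← hk, ha]; ring
    refine ⟨(a + 1) / 2, ?_⟩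
    have h2 : 2 ∣ a + 1 := by omega
    obtain ⟨c, hc⟩ := h2
    rw [this, hc]
    have : (2 * c) / 2 = c := by omega
    rw [this]; ring
  have hne : cgcNext i ≠ 0 := by have := lt_cgcNext i; omega
  exact (padicValNat_dvd_iff_le hne).mp hdvd

theorem stmt_13 (r s : ℕ) (hr : 1 ≤ r) (hrs : r ≤ s) :
    ∃ (v : ℕ) (idx : ℕ → ℕ), 1 ≤ v ∧ idx 1 = r ∧
      (∀ k, 1 ≤ k → k ≤ v → idx (k + 1) = cgcEnd (idx k) + 1) ∧
      idx v ≤ s ∧ s ≤ idx (v + 1) - 1 ∧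
      v ≤ Nat.clog 2 (s - r + 2) := by
  set f := cgcNext with hf
  -- monotonicity: r ≤ f^[m] r
  have hge : ∀ m, r ≤ f^[m] r := by
    intro m
    induction m with
    | zero => simp
    | succ m ih =>
      rw [Function.iterate_succ_apply']
      exact le_trans ih (le_of_lt (lt_cgcNext _))
  -- valuation grows
  have hval : ∀ m, m ≤ padicValNat 2 (f^[m] r) := by
    intro m
    induction m with
    | zero => simp
    | succ m ih =>
      rw [Function.iterate_succ_apply']
      have h1 : 1 ≤ f^[m] r := le_trans hr (hge m)
      have h2 : padicValNat 2 (f (f^[m] r)) = padicValNat 2 (cgcNext (f^[m] r)) := rfl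
      have := padicValNat_cgcNext (f^[m] r) h1
      omega
  -- growth: r + 2^m ≤ f^[m] r + 1
  have hgrow : ∀ m, r + 2 ^ m ≤ f^[m] r + 1 := by
    intro m
    induction m with
    | zero => simp
    | succ m ih =>
      rw [Function.iterate_succ_apply']
      have hv := hval m
      have hpow : 2 ^ m ≤ 2 ^ padicValNat 2 (f^[m] r) :=
        Nat.pow_le_pow_right (by norm_num) hv
      have : f (f^[m] r) = f^[m] r + 2 ^ padicValNat 2 (f^[m] r) := rfl
      rw [this, pow_succ]
      omega
  -- existence of m with f^[m] r > s
  have hex : ∃ m, s < f^[m] r := by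
    refine ⟨s + 1, ?_⟩
    have := hgrow (s + 1)
    have h2 : s + 1 < 2 ^ (s + 1) := Nat.lt_two_pow_self
    omega
  classical
  set v := Nat.find hex with hv
  have hvspec : s < f^[v] r := Nat.find_spec hex
  have hv1 : 1 ≤ v := by
    rcases Nat.eq_zero_or_pos v with h0 | h
    · exfalso; rw [h0] at hvspec; simp at hvspec; omega
    · exact h
  have hvmin : ¬ s < f^[v - 1] r := Nat.find_min hex (by omega)
  push_neg at hvmin
  refine ⟨v, fun k => f^[k - 1] r, hv1, by simp, ?_, hvmin, ?_, ?_⟩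
  · intro k hk _
    show f^[k + 1 - 1] r = cgcEnd (f^[k - 1] r) + 1
    have : k + 1 - 1 = (k - 1) + 1 := by omega
    rw [this, Function.iterate_succ_apply', cgcEnd_add_one]
  · show s ≤ f^[v + 1 - 1] r - 1
    have : v + 1 - 1 = v := by omega
    rw [this]
    omega
  · -- v ≤ clog 2 (s - r + 2)
    have hg := hgrow (v - 1)
    have hlt : 2 ^ (v - 1) < s - r + 2 := by omega
    have := (Nat.lt_clog_iff_pow_lt (by norm_num)).mpr hlt
    omega
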